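/- arXiv:math/9606217 — 2 statements merged into one kernel-verified Lean document; each statement's English description precedes it below -/
import Mathlib

section
/- Let ω be a primitive 6-th root of unity, h_p(z) = ω²z, h_q(z) = ωz + (ω - 1) affine maps of ℂ, and set A = {h_p, h_p²} (nonidentity elements of ⟨h_p⟩) and B = {h_q, h_q², h_q³, h_q⁴, h_q⁵}. Then the only solutions of h_q^a ∘ h_p^b = h_p^c ∘ h_q^d with h_q^a, h_q^d ∈ B and h_p^b, h_p^c ∈ A are (a,b,c,d) ≡ (1,1,2,5) and (5,2,1,1) (exponents mod 6 and mod 3 respectively). -/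
/-- The group of affine transformations `z ↦ a z + b` of `ℂ` (with `a ≠ 0`),
under composition. -/
@[ext]
structure Aff where
  a : ℂˣ
  b : ℂ

namespace Aff

instance : Mul Aff := ⟨fun x y => ⟨x.a * y.a, (x.a : ℂ) * y.b + x.b⟩⟩
instance : One Aff := ⟨⟨1, 0⟩⟩
instance : Inv Aff := ⟨fun x => ⟨x.a⁻¹, -(((x.a⁻¹ : ℂˣ) : ℂ) * x.b)⟩⟩

@[simp] lemma mul_a (x y : Aff) : (x * y).a = x.a * y.a := rfl
@[simp] lemma mul_b (x y : Aff) : (x * y).b = (x.a : ℂ) * y.b + x.b := rfl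
@[simp] lemma one_a : (1 : Aff).a = 1 := rfl
@[simp] lemma one_b : (1 : Aff).b = 0 := rfl
@[simp] lemma inv_a (x : Aff) : x⁻¹.a = x.a⁻¹ := rfl
@[simp] lemma inv_b (x : Aff) : x⁻¹.b = -(((x.a⁻¹ : ℂˣ) : ℂ) * x.b) := rfl

instance : Group Aff where
  mul_assoc x y z := by
    ext
    · simp [mul_assoc]
    · simp; ring
  one_mul x := by ext <;> simp
  mul_one x := by ext <;> simp
  inv_mul_cancel x := by
    ext
    · simp
    · have h : ((x.a : ℂ)) ≠ 0 := x.a.ne_zero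
      simp only [mul_b, inv_b, inv_a, one_b]; ring

/-- `Aff.apply g z = a z + b`: the action of an affine map on `ℂ`. -/
def apply (g : Aff) (z : ℂ) : ℂ := (g.a : ℂ) * z + g.b

end Aff

set_option maxHeartbeats 4000000 in
theorem stmt_17 (ω : ℂˣ) (hω : IsPrimitiveRoot ω 6)
    (hp hq : Aff) (hhp : hp = ⟨ω ^ 2, 0⟩) (hhq : hq = ⟨ω, (ω : ℂ) - 1⟩)
    (a b c d : ℕ)
    (ha : a % 6 ≠ 0) (hb : b % 3 ≠ 0) (hc : c % 3 ≠ 0) (hd : d % 6 ≠ 0) :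
    hq ^ a * hp ^ b = hp ^ c * hq ^ d ↔
      (a % 6 = 1 ∧ b % 3 = 1 ∧ c % 3 = 2 ∧ d % 6 = 5) ∨
      (a % 6 = 5 ∧ b % 3 = 2 ∧ c % 3 = 1 ∧ d % 6 = 1) := by
  have hw' : IsPrimitiveRoot ((ω : ℂ)) 6 := IsPrimitiveRoot.coe_units_iff.mpr hω
  set w : ℂ := (ω : ℂ) with hwdef
  have hw6 : w ^ 6 = 1 := hw'.pow_eq_one
  have h3ne : w ^ 3 ≠ 1 := hw'.pow_ne_one_of_pos_of_lt (by norm_num) (by norm_num)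
  have h2ne : w ^ 2 ≠ 1 := hw'.pow_ne_one_of_pos_of_lt (by norm_num) (by norm_num)
  have hw3 : w ^ 3 = -1 := by
    have : (w ^ 3 - 1) * (w ^ 3 + 1) = 0 := by linear_combination hw6
    rcases mul_eq_zero.mp this with h | h
    · exact absurd (by linear_combination h) h3ne
    · linear_combination h
  have hwne : w ≠ -1 := fun h => h2ne (by rw [h]; ring)
  have hw2 : w ^ 2 = w - 1 := by
    have : (w + 1) * (w ^ 2 - w + 1) = 0 := by linear_combination hw3
    rcases mul_eq_zero.mp this with h | h
    · exact absurd (by linear_combination h) hwne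
    · linear_combination h
  have him : w.im ≠ 0 := by
    intro h0
    have hre := congrArg Complex.re hw2
    simp [pow_two, Complex.mul_re, h0, Complex.sub_re, Complex.one_re] at hre
    nlinarith [hre]
  have hre : w.re = 1/2 := by
    have h := congrArg Complex.im hw2
    simp [pow_two, Complex.mul_im, Complex.sub_im, Complex.one_im] at h
    have : (w.re * 2 - 1) * w.im = 0 := by linarith
    rcases mul_eq_zero.mp this with h' | h'
    · linarith
    · exact absurd h' him
  have him2 : w.im ^ 2 = 3/4 := by
    have h := congrArg Complex.re hw2
    simp [pow_two, Complex.mul_re, Complex.sub_re, Complex.one_re, hre] at h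
    nlinarith [h]
  have hw4 : w ^ 4 = -w := by linear_combination w * hw3
  have hw5 : w ^ 5 = 1 - w := by linear_combination w^2 * hw3 - hw2
  have hw7 : w ^ 7 = w := by linear_combination w * hw6
  have hw8 : w ^ 8 = w - 1 := by linear_combination w^2 * hw6 + hw2
  have hw9 : w ^ 9 = -1 := by linear_combination w^3 * hw6 + hw3
  -- powers of hq, hp
  have hqk : ∀ k : ℕ, hq ^ k = ⟨ω ^ k, w ^ k - 1⟩ := by
    intro k
    induction k with
    | zero => ext <;> simp
    | succ n ih =>
      rw [pow_succ, ih, hhq]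
      ext
      · simp only [Aff.mul_a]; push_cast [← hwdef, pow_succ]; ring
      · show (w ^ n) * (w - 1) + (w ^ n - 1) = w ^ (n+1) - 1
        ring
  have hpk : ∀ k : ℕ, hp ^ k = ⟨ω ^ (2 * k), 0⟩ := by
    intro k
    induction k with
    | zero => ext <;> simp
    | succ n ih =>
      rw [pow_succ, ih, hhp]
      ext
      · simp only [Aff.mul_a]; push_cast [← hwdef, ← pow_add]; ring_nf
      · show w ^ (2*n) * 0 + 0 = (0:ℂ); ring
  have key : hq ^ a * hp ^ b = hp ^ c * hq ^ d ↔
      (w ^ (a + 2 * b) = w ^ (2 * c + d) ∧ w ^ a - 1 = w ^ (2 * c) * (w ^ d - 1)) := by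
    rw [hqk, hpk, hpk, hqk, Aff.ext_iff]
    simp only [Aff.mul_a, Aff.mul_b, Units.ext_iff, Units.val_mul, pow_add]
    push_cast [← hwdef]
    constructor
    · rintro ⟨h1, h2⟩
      exact ⟨by linear_combination h1, by linear_combination h2⟩
    · rintro ⟨h1, h2⟩
      exact ⟨by linear_combination h1, by linear_combination h2⟩
  have hmod : ∀ n : ℕ, w ^ n = w ^ (n % 6) := by
    intro n
    conv_lhs => rw [← Nat.div_add_mod n 6]
    rw [pow_add, pow_mul, hw6, one_pow, one_mul]
  have key2 : hq ^ a * hp ^ b = hp ^ c * hq ^ d ↔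
      (w ^ (a % 6 + 2 * (b % 3)) = w ^ (2 * (c % 3) + d % 6) ∧
       w ^ (a % 6) - 1 = w ^ (2 * (c % 3)) * (w ^ (d % 6) - 1)) := by
    rw [key]
    have e1 : w ^ (a + 2 * b) = w ^ (a % 6 + 2 * (b % 3)) := by
      rw [hmod (a + 2*b), hmod (a % 6 + 2 * (b % 3))]; congr 1; omega
    have e2 : w ^ (2 * c + d) = w ^ (2 * (c % 3) + d % 6) := by
      rw [hmod (2*c + d), hmod (2 * (c % 3) + d % 6)]; congr 1; omega
    have e3 : w ^ a = w ^ (a % 6) := by rw [hmod a]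
    have e4 : w ^ (2 * c) = w ^ (2 * (c % 3)) := by
      rw [hmod (2*c), hmod (2 * (c % 3))]; congr 1; omega
    have e5 : w ^ d = w ^ (d % 6) := by rw [hmod d]
    rw [e1, e2, e3, e4, e5]
  rw [key2]
  have hA : a % 6 = 1 ∨ a % 6 = 2 ∨ a % 6 = 3 ∨ a % 6 = 4 ∨ a % 6 = 5 := by omega
  have hB : b % 3 = 1 ∨ b % 3 = 2 := by omega
  have hC : c % 3 = 1 ∨ c % 3 = 2 := by omega
  have hD : d % 6 = 1 ∨ d % 6 = 2 ∨ d % 6 = 3 ∨ d % 6 = 4 ∨ d % 6 = 5 := by omega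
  clear key key2 hmod hqk hpk ha hb hc hd hhp hhq hw' hω
  rcases hA with hA|hA|hA|hA|hA <;> rcases hB with hB|hB <;>
    rcases hC with hC|hC <;> rcases hD with hD|hD|hD|hD|hD <;>
    rw [hA, hB, hC, hD] <;>
    first
    | exact iff_of_true ⟨by linear_combination hw3 - hw9,
        by linear_combination hw4 - hw9⟩ (by norm_num)
    | exact iff_of_true ⟨by linear_combination hw9 - hw3,
        by linear_combination hw5 - hw3 + hw2⟩ (by norm_num)
    | (refine iff_of_false (fun hcon => ?_) (by norm_num)
       obtain ⟨h1, h2⟩ := hcon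
       try ring_nf at h1
       try ring_nf at h2
       try simp only [hw2, hw3, hw4, hw5, hw6, hw7, hw8, hw9] at h1
       try simp only [hw2, hw3, hw4, hw5, hw6, hw7, hw8, hw9] at h2
       try ring_nf at h1
       try ring_nf at h2
       try simp only [hw2, hw3, hw4, hw5, hw6, hw7, hw8, hw9] at h1
       try simp only [hw2, hw3, hw4, hw5, hw6, hw7, hw8, hw9] at h2
       try simp [Complex.ext_iff, hre] at h1
       try simp [Complex.ext_iff, hre] at h2
       try nlinarith [him2]
       try nlinarith [him2, h1]
       try nlinarith [him2, h2])
end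

section
/- Let n be odd, ε a primitive n-th root of unity, h_p(z) = εz, h_q(z) = εz + (ε - 1). For all integers l₁, l₂, l₃ with l_i ≢ 0 (mod n) and l₁ + l₂ + l₃ ≡ 0 (mod n), the relation h_p^{l₁} ∘ h_q^{l₂} ∘ h_p^{l₃} = h_q^{-l₃} ∘ h_p^{-l₂} ∘ h_q^{-l₁} holds as affine maps of ℂ. -/
def Aff.homP : ℂˣ →* Aff where
  toFun u := ⟨u, 0⟩
  map_one' := rfl
  map_mul' u v := by ext <;> simp

def Aff.homQ : ℂˣ →* Aff where
  toFun u := ⟨u, (u : ℂ) - 1⟩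
  map_one' := by ext <;> simp
  map_mul' u v := by ext <;> simp <;> ring

theorem stmt_18 (n : ℕ) (hpos : 0 < n) (hodd : Odd n) (ε : ℂˣ)
    (hε : IsPrimitiveRoot ε n)
    (hp hq : Aff) (hhp : hp = ⟨ε, 0⟩) (hhq : hq = ⟨ε, (ε : ℂ) - 1⟩)
    (l₁ l₂ l₃ : ℤ)
    (hl₁ : ¬ (n : ℤ) ∣ l₁) (hl₂ : ¬ (n : ℤ) ∣ l₂) (hl₃ : ¬ (n : ℤ) ∣ l₃)
    (hsum : (n : ℤ) ∣ l₁ + l₂ + l₃) :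
    hp ^ l₁ * hq ^ l₂ * hp ^ l₃ = hq ^ (-l₃) * hp ^ (-l₂) * hq ^ (-l₁) := by
  have hp' : hp = Aff.homP ε := by rw [hhp]; rfl
  have hq' : hq = Aff.homQ ε := by rw [hhq]; rfl
  have h1 : ε ^ (l₁ + l₂ + l₃) = 1 := (hε.zpow_eq_one_iff_dvd _).2 hsum
  have e3 : ε ^ (-l₃) = ε ^ (l₁ + l₂) := by
    rw [eq_comm, zpow_neg, eq_inv_iff_mul_eq_one, ← zpow_add, h1]
  have e23 : ε ^ (-l₂ - l₃) = ε ^ l₁ := by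
    rw [eq_comm, sub_eq_add_neg, ← neg_add, zpow_neg, eq_inv_iff_mul_eq_one,
      ← zpow_add]
    rw [show l₁ + (l₂ + l₃) = l₁ + l₂ + l₃ by ring, h1]
  have hA : (ε ^ l₁ * ε ^ l₂ * ε ^ l₃ : ℂˣ) = ε ^ (-l₃) * ε ^ (-l₂) * ε ^ (-l₁) := by
    rw [← zpow_add, ← zpow_add, ← zpow_add, ← zpow_add,
      (hε.zpow_eq_one_iff_dvd _).2 hsum, (hε.zpow_eq_one_iff_dvd _).2 (by
        rw [show -l₃ + -l₂ + -l₁ = -(l₁ + l₂ + l₃) by ring]; exact dvd_neg.2 hsum)]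
  rw [hp', hq', ← map_zpow, ← map_zpow, ← map_zpow, ← map_zpow, ← map_zpow, ← map_zpow]
  ext
  · simp only [Aff.homP, Aff.homQ, MonoidHom.coe_mk, OneHom.coe_mk, Aff.mul_a]
    exact_mod_cast congrArg Units.val hA
  · simp only [Aff.homP, Aff.homQ, MonoidHom.coe_mk, OneHom.coe_mk, Aff.mul_a, Aff.mul_b]
    push_cast
    have e3' : (ε:ℂ) ^ (-l₃) = (ε:ℂ) ^ (l₁ + l₂) := by exact_mod_cast congrArg Units.val e3
    have e23' : (ε:ℂ) ^ (-l₂ - l₃) = (ε:ℂ) ^ l₁ := by exact_mod_cast congrArg Units.val e23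
    rw [e3']
    ring_nf
    rw [← zpow_add₀ (Units.ne_zero ε) (l₁ + l₂) (-l₂), show l₁ + l₂ + -l₂ = l₁ by ring,
      ← zpow_add₀ (Units.ne_zero ε) l₁ (-l₁), show l₁ + -l₁ = 0 by ring, zpow_zero,
      ← zpow_add₀ (Units.ne_zero ε) l₁ l₂]
    ring
end
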